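/- Let N ≥ 1, let q = (q_1,…,q_N) ∈ ℂ^N and z ∈ ℂ. Then the determinant of the generalized Vandermonde matrix Ξ(z,q) equals det Ξ(z,q) = N·z·∏_{1 ≤ j < i ≤ N} (q_i − q_j). -/

import Mathlib

open Matrix Finset
open scoped Kronecker

noncomputable section

/-- `ρ(i)`: in 1-based terms ρ(i) = i−1 for 1 ≤ i ≤ N−1 and ρ(N) = N. -/
def rho (N : ℕ) (i : Fin N) : ℕ := if (i : ℕ) = N - 1 then N else (i : ℕ)

/-- `q̄_j = q_j − (1/N)·Σ_k q_k`. -/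
def qbar (N : ℕ) (q : Fin N → ℂ) (j : Fin N) : ℂ := q j - (∑ k, q k) / N

/-- The generalized Vandermonde matrix `Ξ(z,q)` with entries `(z + q̄_j)^{ρ(i)}`. -/
def Xi (N : ℕ) (z : ℂ) (q : Fin N → ℂ) : Matrix (Fin N) (Fin N) ℂ :=
  Matrix.of fun i j => (z + qbar N q j) ^ rho N i

/-- The diagonal matrix `D(q)` with `D_{ii}(q) = ∏_{k≠i}(q_i − q_k)`. -/
def Dmat (N : ℕ) (q : Fin N → ℂ) : Matrix (Fin N) (Fin N) ℂ :=
  Matrix.diagonal fun i => ∏ k ∈ Finset.univ.erase i, (q i - q k)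

/-- The IRF-Vertex transformation matrix `g(z,q) = Ξ(z,q)·D(q)⁻¹`. -/
def gmat (N : ℕ) (z : ℂ) (q : Fin N → ℂ) : Matrix (Fin N) (Fin N) ℂ :=
  Xi N z q * (Dmat N q)⁻¹

/-- For `N ≥ 1`, `q ∈ ℂ^N`, `z ∈ ℂ`:
`det Ξ(z,q) = N·z·∏_{1 ≤ j < i ≤ N}(q_i − q_j)`. -/
theorem det_Xi (N : ℕ) (hN : 1 ≤ N) (z : ℂ) (q : Fin N → ℂ) :
    (Xi N z q).det =
      (N : ℂ) * z * ∏ i, ∏ j ∈ Finset.univ.filter (fun j => j < i), (q i - q j) := by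
  obtain ⟨n, rfl⟩ : ∃ n, N = n + 1 := ⟨N - 1, (Nat.succ_pred_eq_of_pos hN).symm⟩
  set x : Fin (n + 1) → ℂ := fun j => z + qbar (n + 1) q j with hx
  set P : Polynomial ℂ := ∏ k : Fin (n + 1), (Polynomial.X - Polynomial.C (x k)) with hP
  have hmonic : P.Monic :=
    Polynomial.monic_prod_of_monic _ _ fun k _ => Polynomial.monic_X_sub_C _
  have hdeg : P.natDegree = n + 1 := by
    rw [hP, Polynomial.natDegree_prod _ _ fun k _ => (Polynomial.monic_X_sub_C (x k)).ne_zero]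
    simp
  have hcoeff_top : P.coeff (n + 1) = 1 := by
    have h := hmonic.coeff_natDegree; rwa [hdeg] at h
  set c : Fin (n + 1) → ℂ := fun i => -(P.coeff i) with hc
  have hroot : ∀ j, x j ^ (n + 1) = ∑ i : Fin (n + 1), c i * x j ^ (i : ℕ) := by
    intro j
    have h0 : P.eval (x j) = 0 := by
      rw [hP, Polynomial.eval_prod]
      exact Finset.prod_eq_zero (Finset.mem_univ j) (by simp)
    have he := Polynomial.eval_eq_sum_range' (p := P) (n := n + 2) (by omega) (x j)
    rw [Finset.sum_range_succ, hcoeff_top, h0] at he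
    have hfin : (∑ i : Fin (n + 1), c i * x j ^ (i : ℕ))
        = ∑ i ∈ Finset.range (n + 1), -(P.coeff i) * x j ^ i :=
      Fin.sum_univ_eq_sum_range (fun i => -(P.coeff i) * x j ^ i) (n + 1)
    have hneg : ∑ i ∈ Finset.range (n + 1), -(P.coeff i) * x j ^ i
        = -∑ i ∈ Finset.range (n + 1), P.coeff i * x j ^ i := by
      rw [← Finset.sum_neg_distrib]
      exact Finset.sum_congr rfl fun i _ => by ring
    rw [hfin, hneg]
    linear_combination -he
  have htr : (Xi (n + 1) z q)ᵀ =
      (Matrix.vandermonde x).updateCol (Fin.last n)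
        (fun k => ∑ i, c i • Matrix.vandermonde x k i) := by
    ext i j
    by_cases hj : j = Fin.last n
    · subst hj
      simp only [Matrix.transpose_apply, Matrix.updateCol_self, Xi, Matrix.of_apply, rho,
        Matrix.vandermonde_apply, smul_eq_mul]
      rw [if_pos (by simp [Fin.last])]
      exact hroot i
    · have hj' : (j : ℕ) ≠ n := fun h => hj (Fin.ext (by simpa using h))
      simp [Matrix.updateCol_ne hj, hx, Xi, rho, Matrix.vandermonde_apply, hj',
        Nat.add_sub_cancel]
  have hdet : (Xi (n + 1) z q).det = c (Fin.last n) * (Matrix.vandermonde x).det := by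
    rw [← Matrix.det_transpose, htr, Matrix.det_updateCol_sum, smul_eq_mul]
  have hsumx : ∑ k, x k = (n + 1 : ℂ) * z := by
    have hne : ((n + 1 : ℕ) : ℂ) ≠ 0 := Nat.cast_ne_zero.mpr n.succ_ne_zero
    simp only [hx, qbar, Finset.sum_add_distrib, Finset.sum_sub_distrib, Finset.sum_const,
      Finset.card_univ, Fintype.card_fin, nsmul_eq_mul]
    have hne2 : (1 + (n : ℂ)) ≠ 0 := by
      intro h; apply hne; push_cast; linear_combination h
    have key : ((n : ℂ)) * (1 + (n : ℂ))⁻¹ + (1 + (n : ℂ))⁻¹ = 1 := by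
      field_simp
      ring
    field_simp
    push_cast; ring
  have hclast : c (Fin.last n) = (n + 1 : ℂ) * z := by
    have hnc : P.nextCoeff = -∑ k, x k := Polynomial.prod_X_sub_C_nextCoeff x
    rw [Polynomial.nextCoeff_of_natDegree_pos (by omega), hdeg] at hnc
    simp only [Nat.add_sub_cancel] at hnc
    simp [hc, hnc, hsumx]
  have hvdm : (Matrix.vandermonde x).det =
      ∏ i, ∏ j ∈ Finset.univ.filter (fun j => j < i), (q i - q j) := by
    rw [Matrix.det_vandermonde]
    have hswap : (∏ i : Fin (n + 1), ∏ j ∈ Finset.Ioi i, (x j - x i)) =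
        ∏ j : Fin (n + 1), ∏ i ∈ Finset.Iio j, (x j - x i) :=
      Finset.prod_comm' (by simp)
    rw [hswap]
    refine Finset.prod_congr rfl fun i _ => ?_
    rw [show Finset.univ.filter (fun j => j < i) = Finset.Iio i from Finset.ext (by simp)]
    refine Finset.prod_congr rfl fun j _ => ?_
    simp [hx, qbar]
  rw [hdet, hclast, hvdm]
  push_cast
  ring
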